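/- arXiv:2004.04183 — 2 statements merged into one kernel-verified Lean document; each statement's English description precedes it below -/
import Mathlib

section
/- For any bundle π : E → B, the Dirichlet extent functor D : Setᵒᵖ → Set defined by D(X) = Σ_{b ∈ B} (X → π⁻¹(b)) sends connected colimits of sets to connected limits; i.e., D preserves connected limits as a functor from Setᵒᵖ. -/
open CategoryTheory CategoryTheory.Limits Opposite

universe u

/-- The fiber `π⁻¹(b)` of a bundle `π : E → B` over `b ∈ B`. -/
def fiber (π : Arrow (Type u)) (b : π.right) : Type u := { e : π.left // π.hom e = b }

/-- The Dirichlet functor `X ↦ Σ (b : B), (X → π⁻¹ b)` of a bundle `π : E → B`. -/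
def ext (π : Arrow (Type u)) : (Type u)ᵒᵖ ⥤ Type u where
  obj X := Σ b : π.right, X.unop → fiber π b
  map g := TypeCat.ofHom fun s => ⟨s.1, fun y => s.2 (g.unop y)⟩

theorem ext_sigma_ext {π : Arrow (Type u)} {A : Type u}
    {x y : Σ b : π.right, A → fiber π b}
    (h1 : x.1 = y.1) (h2 : ∀ a, (x.2 a).1 = (y.2 a).1) : x = y := by
  obtain ⟨b, f⟩ := x
  obtain ⟨b', f'⟩ := y
  cases h1
  exact congrArg _ (funext fun a => Subtype.ext (h2 a))

/-- For any bundle `π : E → B`, the Dirichlet extent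
`D(X) = Σ (b : B), (X → π⁻¹ b)` preserves connected limits as a functor from
`Setᵒᵖ` (equivalently, it sends connected colimits of sets to connected
limits). -/
theorem ext_preserves_connected_limits (π : Arrow (Type u)) :
    ∀ (J : Type u) [SmallCategory J] [IsConnected J],
      Nonempty (PreservesLimitsOfShape J (ext π)) := by
  intro J _ _
  refine ⟨⟨fun {K} => ⟨fun {c} hc => ?_⟩⟩⟩
  have hcolim : IsColimit (coconeLeftOpOfCone c) := isColimitCoconeLeftOpOfCone K hc
  rw [Types.isLimit_iff]
  intro s hs
  -- the first components are constant
  have hb : ∀ i j : J, (s i).1 = (s j).1 :=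
    constant_of_preserves_morphisms (fun j => (s j).1)
      (fun i j f => show (s i).1 = (s j).1 from congrArg Sigma.fst (hs f))
  set j0 : J := Classical.arbitrary J with hj0
  set b : π.right := (s j0).1 with hbdef
  -- normalized second components, valued in `fiber π b`
  have tprop : ∀ (j : J) (e : (K.obj j).unop), π.hom ((s j).2 e).1 = b := by
    intro j e
    rw [((s j).2 e).2, hb j j0]
  let t : ∀ j : J, (K.obj j).unop → fiber π b := fun j e => ⟨((s j).2 e).1, tprop j e⟩
  have key : ∀ {i j : J} (g : j ⟶ i) (e : (K.obj i).unop),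
      ((s i).2 e).1 = ((s j).2 ((K.map g).unop e)).1 := by
    intro i j g e
    have h := hs g
    rw [← h]
    rfl
  -- the cocone over `K.leftOp` with apex `fiber π b`
  let D : Cocone K.leftOp :=
    { pt := fiber π b
      ι :=
        { app := fun j => TypeCat.ofHom fun e => t j.unop e
          naturality := fun i j f => by
            ext e
            exact Subtype.ext (key f.unop e).symm } }
  let u : c.pt.unop → fiber π b := hcolim.desc D
  have hu : ∀ (j : J) (e : (K.obj j).unop),
      u ((c.π.app j).unop e) = t j e := fun j e =>
    ConcreteCategory.congr_hom (hcolim.fac D (op j)) e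
  refine ⟨⟨b, u⟩, fun j => ?_, fun y hy => ?_⟩
  · refine ext_sigma_ext (hb j0 j) fun e => ?_
    show (u ((c.π.app j).unop e)).1 = ((s j).2 e).1
    rw [hu j e]
  · -- uniqueness
    have hy1 : y.1 = b := by
      have := congrArg Sigma.fst (hy j0)
      exact this
    have y2prop : ∀ e : c.pt.unop, π.hom (y.2 e).1 = b := by
      intro e
      rw [(y.2 e).2, hy1]
    let y2 : c.pt.unop → fiber π b := fun e => ⟨(y.2 e).1, y2prop e⟩
    have hy2 : ∀ (j : J) (e : (K.obj j).unop),
        (y.2 ((c.π.app j).unop e)).1 = ((s j).2 e).1 := by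
      intro j e
      rw [← hy j]
      rfl
    have : y2 = u := by
      refine funext fun e' => ConcreteCategory.congr_hom (hcolim.hom_ext fun j => ?_ : TypeCat.ofHom y2 = TypeCat.ofHom u) e'
      ext e
      show y2 ((c.π.app j.unop).unop e) = u ((c.π.app j.unop).unop e)
      rw [hu j.unop e]
      exact Subtype.ext (hy2 j.unop e)
    exact ext_sigma_ext hy1 fun e => congrArg Subtype.val (congrFun this e)
end

section
/- Let D : Setᵒᵖ → Set be a functor that preserves connected limits (i.e., sends connected colimits in Set to limits in Set). Then D is naturally isomorphic to the Dirichlet extent of the bundle D(!_0) : D(1) → D(0), where !_0 : ∅ → 1; concretely, D(X) ≅ Σ_{b ∈ D(1)} (X → fiber of D(!_0) over b) naturally in X. -/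
open CategoryTheory CategoryTheory.Limits Opposite

universe u

/-- The unique map `!_0 : ∅ → 1`. -/
def bangZero : PEmpty.{u + 1} ⟶ PUnit.{u + 1} := TypeCat.ofHom fun e => e.elim

namespace DirichletAux

/-- Extensionality for elements of the Dirichlet extent. -/
lemma sigma_ext {π : Arrow (Type u)} {X : Type u}
    (s t : Σ b : π.right, X → fiber π b)
    (h1 : s.1 = t.1) (h2 : ∀ x, (s.2 x).1 = (t.2 x).1) : s = t := by
  obtain ⟨b1, f1⟩ := s
  obtain ⟨b2, f2⟩ := t
  dsimp at h1
  subst h1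
  have : f1 = f2 := funext fun x => Subtype.ext (h2 x)
  rw [this]

variable (D : (Type u)ᵒᵖ ⥤ Type u)

lemma key {X Y : (Type u)ᵒᵖ} (g : X ⟶ Y) {Z : Type u} (f : Z ⟶ Y.unop) (d : D.obj X) :
    D.map f.op (D.map g d) = D.map ((f ≫ g.unop).op) d := by
  rw [op_comp, Quiver.Hom.op_unop, FunctorToTypes.map_comp_apply]

/-- The canonical natural transformation from `D` to the extent of `D(!₀)`. -/
def eta : D ⟶ ext (Arrow.mk (D.map bangZero.{u}.op)) where
  app X := TypeCat.ofHom fun d =>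
    ⟨D.map (Quiver.Hom.op (TypeCat.ofHom (fun e => e.elim) : PEmpty.{u + 1} ⟶ X.unop)) d,
      fun x =>
        ⟨D.map (Quiver.Hom.op (TypeCat.ofHom (fun _ => x) : PUnit.{u + 1} ⟶ X.unop)) d, by
          show D.map bangZero.op (D.map _ d) = _
          rw [← FunctorToTypes.map_comp_apply, ← op_comp]
          have : (bangZero.{u} ≫ (TypeCat.ofHom (fun _ => x) : PUnit.{u + 1} ⟶ X.unop)) =
              (TypeCat.ofHom (fun e => e.elim)) := ConcreteCategory.hom_ext _ _ fun e => e.elim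
          rw [this]⟩⟩
  naturality X Y g := by
    refine ConcreteCategory.hom_ext _ _ fun d => ?_
    apply sigma_ext
    · show D.map (Quiver.Hom.op _) (D.map g d) = D.map (Quiver.Hom.op _) d
      rw [key]
      have : ((TypeCat.ofHom (fun e => e.elim) : PEmpty.{u + 1} ⟶ Y.unop) ≫ g.unop) =
          (TypeCat.ofHom (fun e => e.elim)) := ConcreteCategory.hom_ext _ _ fun e => e.elim
      rw [this]
    · intro y
      show D.map (Quiver.Hom.op _) (D.map g d) = D.map (Quiver.Hom.op _) d
      rw [key]
      rfl

/-- The wide span with apex `∅` and an arm `!₀ : ∅ → 1` for each `x : X`. -/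
def Fd (X : Type u) : WidePushoutShape X ⥤ Type u :=
  WidePushoutShape.wideSpan PEmpty.{u + 1} (fun _ => PUnit.{u + 1}) (fun _ => bangZero)

/-- The cocone on the wide span with apex `X`. -/
def cc (X : Type u) : Cocone (Fd X) :=
  WidePushoutShape.mkCocone (F := Fd X) (X := X) (TypeCat.ofHom fun e => e.elim)
    (fun x => TypeCat.ofHom fun _ => x)
    (fun _ => ConcreteCategory.hom_ext _ _ fun e => e.elim)

/-- `X` is the colimit of the wide span. -/
def hcc (X : Type u) : IsColimit (cc X) where
  desc s := TypeCat.ofHom fun x => s.ι.app (some x) PUnit.unit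
  fac s j := by
    cases j with
    | none => exact ConcreteCategory.hom_ext _ _ fun e => e.elim
    | some x => exact ConcreteCategory.hom_ext _ _ fun u => by cases u; rfl
  uniq s m hm := by
    refine ConcreteCategory.hom_ext _ _ fun x => ?_
    exact ConcreteCategory.congr_hom (hm (some x)) PUnit.unit

/-- The cone on `(Fd X).op ⋙ D` with point the extent of `D(!₀)` evaluated at `X`. -/
def ec (X : Type u) : Cone ((Fd X).op ⋙ D) where
  pt := (ext (Arrow.mk (D.map bangZero.{u}.op))).obj (op X)
  π :=
    { app := fun j =>
        match j with
        | ⟨none⟩ => TypeCat.ofHom fun s => s.1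
        | ⟨some x⟩ => TypeCat.ofHom fun s => (s.2 x).1
      naturality := by
        rintro ⟨j⟩ ⟨j'⟩ ⟨f⟩
        change WidePushoutShape.Hom j' j at f
        cases f with
        | id =>
          rw [WidePushoutShape.hom_id]
          simp
        | init x =>
          refine ConcreteCategory.hom_ext _ _ fun s => ?_
          exact ((s.2 x).2).symm }

/-- The extent cone is a limit cone. -/
def hec (X : Type u) : IsLimit (ec D X) where
  lift s := TypeCat.ofHom fun w =>
    ⟨s.π.app (op none) w, fun x =>
      ⟨s.π.app (op (some x)) w, by
        have h := ConcreteCategory.congr_hom (s.w (@Quiver.Hom.op (WidePushoutShape X) _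
          none (some x) (WidePushoutShape.Hom.init x))) w
        exact h⟩⟩
  fac s j := by
    rcases j with ⟨(_ | x)⟩ <;> rfl
  uniq s m hm := by
    refine ConcreteCategory.hom_ext _ _ fun w => ?_
    exact sigma_ext _ _ (types_congr_hom (hm (op none)) w)
      (fun x => types_congr_hom (hm (op (some x))) w)

end DirichletAux

/-- If `D : Setᵒᵖ → Set` preserves connected limits (i.e. sends
connected colimits in `Set` to limits in `Set`), then `D` is naturally
isomorphic to the Dirichlet extent of the bundle `D(!_0) : D(1) → D(0)`;
concretely, `D(X) ≅ Σ (b : D 1), (X → D(!_0)⁻¹ b)` naturally in `X`. -/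
theorem dirichlet_iso_ext_of_preserves_connected_limits
    (D : (Type u)ᵒᵖ ⥤ Type u)
    (hD : ∀ (J : Type u) [SmallCategory J] [IsConnected J],
      Nonempty (PreservesLimitsOfShape J D)) :
    Nonempty (D ≅ ext (Arrow.mk (D.map bangZero.{u}.op))) := by
  have hiso : ∀ Xop : (Type u)ᵒᵖ, IsIso ((DirichletAux.eta D).app Xop) := by
    intro Xop
    obtain ⟨X⟩ := Xop
    haveI : PreservesLimitsOfShape (WidePushoutShape X)ᵒᵖ D :=
      (hD ((WidePushoutShape X)ᵒᵖ)).some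
    have hlim : IsLimit (D.mapCone (DirichletAux.cc X).op) :=
      isLimitOfPreserves D (DirichletAux.hcc X).op
    have hφ : (DirichletAux.eta D).app (op X) =
        (IsLimit.conePointUniqueUpToIso hlim (DirichletAux.hec D X)).hom := by
      apply (DirichletAux.hec D X).hom_ext
      intro j
      erw [IsLimit.conePointUniqueUpToIso_hom_comp]
      rcases j with ⟨(_ | x)⟩ <;> rfl
    rw [hφ]
    exact Iso.isIso_hom _
  haveI : ∀ Xop : (Type u)ᵒᵖ, IsIso ((DirichletAux.eta D).app Xop) := hiso
  haveI : IsIso (DirichletAux.eta D) := NatIso.isIso_of_isIso_app _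
  exact ⟨asIso (DirichletAux.eta D)⟩
end
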